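/- Let N ≥ 1 and S be the shift on ℓ²(ℤ). For m ∈ ℤ define ψ^m ∈ ℓ²(ℤ×{1,...,2N+1}) by ψ^m_{·,2k} = 0 and ψ^m_{·,2k+1} = (−I−S)^k e_m where e_m is the standard basis vector. Then every f in the kernel of the nanoribbon Laplacian Δ satisfies f = Σ_{m∈ℤ} f_{m,1} ψ^m, and the map f ↦ (f_{m,1})_{m∈ℤ} is a linear isomorphism from ker Δ ∩ ℓ²(Γ) onto ℓ²(ℤ). -/

import Mathlib

/-- The operator `(-I - S)` on sequences, `(Th) n = -h n - h (n+1)`. -/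
def negIS : (ℤ → ℝ) → (ℤ → ℝ) := fun u n => -u n - u (n+1)

/-- The standard basis vector `e_m ∈ ℓ²(ℤ)`. -/
def stdBasis (m : ℤ) : ℤ → ℝ := fun n => if n = m then 1 else 0

/-- The compactly supported flat-band eigenfunctions `ψ^m`:
`ψ^m_{·,2k} = 0`, `ψ^m_{·,2k+1} = (-I-S)^k e_m`. -/
def psiFun (N : ℕ) (m : ℤ) : ℤ → ℕ → ℝ := fun n k =>
  if k % 2 = 1 ∧ k ≤ 2*N+1 then negIS^[k/2] (stdBasis m) n else 0

/-- Membership in the kernel of the nanoribbon Laplacian within `ℓ²(Γ)`. -/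
def InKerDelta (N : ℕ) (f : ℤ → ℕ → ℝ) : Prop :=
  (∀ (n : ℤ) (k : ℕ), (k = 0 ∨ 2*N+1 < k) → f n k = 0) ∧
  (Summable fun x : ℤ × ℕ => (f x.1 x.2)^2) ∧
  (∀ n : ℤ, ∀ k ≤ N, f n (2*k) + f (n-1) (2*k+2) + f n (2*k+2) = 0) ∧
  (∀ n : ℤ, ∀ k : ℕ, 1 ≤ k → k ≤ N →
    f n (2*k-1) + f (n+1) (2*k-1) + f n (2*k+1) = 0)

lemma negIS_iterate_local (j : ℕ) : ∀ (u v : ℤ → ℝ) (n : ℤ),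
    (∀ i : ℤ, n ≤ i → i ≤ n + j → u i = v i) → negIS^[j] u n = negIS^[j] v n := by
  induction j with
  | zero => intro u v n h; simpa using h n le_rfl (by simp)
  | succ j ih =>
    intro u v n h
    rw [Function.iterate_succ_apply, Function.iterate_succ_apply]
    apply ih
    intro i hi1 hi2
    have e1 : u i = v i := h i hi1 (by push_cast at hi2 ⊢; omega)
    have e2 : u (i+1) = v (i+1) := h (i+1) (by omega) (by push_cast at hi2 ⊢; omega)
    simp [negIS, e1, e2]

lemma negIS_iterate_sum {ι : Type*} (j : ℕ) : ∀ (F : Finset ι) (g : ι → ℤ → ℝ) (n : ℤ),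
    negIS^[j] (fun x => ∑ m ∈ F, g m x) n = ∑ m ∈ F, negIS^[j] (g m) n := by
  induction j with
  | zero => intro F g n; simp
  | succ j ih =>
    intro F g n
    rw [Function.iterate_succ_apply]
    have e : negIS (fun x => ∑ m ∈ F, g m x) = fun x => ∑ m ∈ F, negIS (g m) x := by
      funext x
      simp [negIS, Finset.sum_sub_distrib]
    rw [e, ih F (fun m => negIS (g m)) n]
    simp [Function.iterate_succ_apply]

lemma negIS_iterate_smul (j : ℕ) : ∀ (c : ℝ) (u : ℤ → ℝ) (n : ℤ),
    negIS^[j] (fun x => c * u x) n = c * negIS^[j] u n := by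
  induction j with
  | zero => intro c u n; simp
  | succ j ih =>
    intro c u n
    rw [Function.iterate_succ_apply]
    have e : negIS (fun x => c * u x) = fun x => c * negIS u x := by
      funext x; simp [negIS]; ring
    rw [e, ih c (negIS u) n, Function.iterate_succ_apply]

lemma negIS_iterate_zero (j : ℕ) (n : ℤ) : negIS^[j] (fun _ => (0:ℝ)) n = 0 := by
  have := negIS_iterate_smul j 0 (fun _ => 0) n
  simpa using this

lemma negIS_iterate_stdBasis_eq_zero (j : ℕ) (m n : ℤ) (h : m < n ∨ n + j < m) :
    negIS^[j] (stdBasis m) n = 0 := by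
  rw [negIS_iterate_local j (stdBasis m) (fun _ => 0) n]
  · exact negIS_iterate_zero j n
  · intro i hi1 hi2
    simp only [stdBasis, ite_eq_right_iff]
    intro hi; omega

lemma negIS_iterate_expand (j : ℕ) (h : ℤ → ℝ) (n : ℤ) :
    negIS^[j] h n = ∑ m ∈ Finset.Icc n (n + (j:ℤ)), h m * negIS^[j] (stdBasis m) n := by
  have h1 : negIS^[j] h n =
      negIS^[j] (fun x => ∑ m ∈ Finset.Icc n (n + (j:ℤ)), h m * stdBasis m x) n := by
    apply negIS_iterate_local
    intro i hi1 hi2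
    simp only [stdBasis, mul_ite, mul_one, mul_zero]
    rw [Finset.sum_ite_eq (Finset.Icc n (n + (j:ℤ))) i h]
    simp [Finset.mem_Icc, hi1, hi2]
  rw [h1, negIS_iterate_sum]
  exact Finset.sum_congr rfl (fun m _ => negIS_iterate_smul j (h m) (stdBasis m) n)

lemma kerDelta_even (N : ℕ) (f : ℤ → ℕ → ℝ) (hf : InKerDelta N f) :
    ∀ (k : ℕ) (n : ℤ), f n (2*k) = 0 := by
  obtain ⟨hD, hS, hA, hB⟩ := hf
  intro k
  induction k with
  | zero => intro n; exact hD n 0 (Or.inl rfl)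
  | succ k ih =>
    by_cases hk : 2*N+1 < 2*(k+1)
    · intro n; exact hD n _ (Or.inr hk)
    · have hkN : k ≤ N := by omega
      have hrel : ∀ n : ℤ, f (n-1) (2*k+2) + f n (2*k+2) = 0 := by
        intro n; have := hA n k hkN; rw [ih n] at this; linarith
      set g : ℤ → ℝ := fun n => f n (2*k+2) with hg
      have step : ∀ n : ℤ, g (n+1) = - g n := by
        intro n
        have h2 := hrel (n+1)
        rw [show n+1-1 = n from by ring] at h2
        simp only [hg]; linarith
      have hsq : ∀ n : ℤ, g n ^ 2 = g 0 ^ 2 := by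
        intro n
        induction n using Int.induction_on with
        | zero => rfl
        | succ i hi => rw [step i, neg_sq]; exact hi
        | pred i hi =>
          have h3 := step (-(i:ℤ) - 1)
          rw [show (-(i:ℤ)-1+1) = -(i:ℤ) from by ring] at h3
          have : g (-(i:ℤ)-1) = - g (-(i:ℤ)) := by linarith
          rw [this, neg_sq]; exact hi
      have hinj : Function.Injective (fun n : ℤ => ((n, 2*k+2) : ℤ × ℕ)) := by
        intro a b hab
        exact congrArg Prod.fst hab
      have hsum0 : Summable ((fun x : ℤ × ℕ => (f x.1 x.2)^2) ∘ (fun n : ℤ => ((n, 2*k+2) : ℤ × ℕ))) :=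
        hS.comp_injective hinj
      have hsum : Summable fun n : ℤ => g n ^ 2 := by
        simpa [Function.comp_def, hg] using hsum0
      have hconst : (fun n : ℤ => g n ^ 2) = fun _ : ℤ => g 0 ^ 2 := funext hsq
      rw [hconst] at hsum
      have hg0 : g 0 ^ 2 = 0 :=
        (tendsto_nhds_unique hsum.tendsto_cofinite_zero tendsto_const_nhds).symm
      intro n
      have h4 : g n ^ 2 = 0 := by rw [hsq n]; exact hg0
      have h5 : g n = 0 := by
        have := sq_nonneg (g n); nlinarith
      simpa [hg, show 2*(k+1) = 2*k+2 from by ring] using h5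

lemma kerDelta_odd (N : ℕ) (f : ℤ → ℕ → ℝ) (hf : InKerDelta N f) :
    ∀ j : ℕ, j ≤ N → ∀ n : ℤ, f n (2*j+1) = negIS^[j] (fun m => f m 1) n := by
  intro j
  induction j with
  | zero => intro _ n; simp
  | succ j ih =>
    intro hjN n
    have ihn := ih (by omega)
    have hb := hf.2.2.2 n (j+1) (by omega) hjN
    rw [show 2*(j+1)-1 = 2*j+1 from by omega] at hb
    rw [show 2*(j+1)+1 = 2*j+1+2 from by omega] at hb ⊢
    rw [ihn n, ihn (n+1)] at hb
    rw [Function.iterate_succ_apply']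
    simp only [negIS] at hb ⊢
    linarith

lemma summable_sq_negIS {u : ℤ → ℝ} (hu : Summable fun n => u n ^ 2) :
    Summable fun n => negIS u n ^ 2 := by
  have hs : Summable fun n : ℤ => u (n+1) ^ 2 := hu.comp_injective (add_left_injective 1)
  have hbig : Summable fun n : ℤ => 2 * u n ^ 2 + 2 * u (n+1) ^ 2 :=
    (hu.mul_left 2).add (hs.mul_left 2)
  refine Summable.of_nonneg_of_le (fun n => sq_nonneg _) (fun n => ?_) hbig
  simp only [negIS]
  nlinarith [sq_nonneg (u n - u (n+1))]

lemma summable_sq_negIS_iter (j : ℕ) {u : ℤ → ℝ} (hu : Summable fun n => u n ^ 2) :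
    Summable fun n => negIS^[j] u n ^ 2 := by
  induction j with
  | zero => simpa using hu
  | succ j ih =>
    have := summable_sq_negIS ih
    simpa [Function.iterate_succ_apply'] using this

lemma kerDelta_expand (N : ℕ) (f : ℤ → ℕ → ℝ) (hf : InKerDelta N f) (n : ℤ) (k : ℕ) :
    f n k = ∑' m : ℤ, f m 1 * psiFun N m n k := by
  by_cases hc : k % 2 = 1 ∧ k ≤ 2*N+1
  · set j := k / 2 with hj
    have hkj : k = 2*j+1 := by omega
    have hjN : j ≤ N := by omega
    have htsum : ∑' m : ℤ, f m 1 * psiFun N m n k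
        = ∑ m ∈ Finset.Icc n (n + (j:ℤ)), f m 1 * negIS^[j] (stdBasis m) n := by
      rw [tsum_eq_sum (s := Finset.Icc n (n + (j:ℤ)))]
      · exact Finset.sum_congr rfl (fun m _ => by rw [psiFun, if_pos hc])
      · intro m hm
        rw [psiFun, if_pos hc]
        rw [negIS_iterate_stdBasis_eq_zero j m n (by rw [Finset.mem_Icc] at hm; omega)]
        ring
    rw [htsum, ← negIS_iterate_expand j (fun m => f m 1) n, ← kerDelta_odd N f hf j hjN n, hkj]
  · have hz : f n k = 0 := by
      by_cases hk2 : k % 2 = 1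
      · exact hf.1 n k (Or.inr (by omega))
      · have : k = 2*(k/2) := by omega
        rw [this]; exact kerDelta_even N f hf _ n
    rw [hz]
    simp [psiFun, if_neg hc]

set_option maxHeartbeats 2000000 in
/-- Every flat-band eigenfunction `f` expands as `f = Σ_m f_{m,1} ψ^m`, and
`f ↦ (f_{m,1})_m` is a linear isomorphism from `ker Δ ∩ ℓ²(Γ)` onto `ℓ²(ℤ)`
(bijectivity: each `h ∈ ℓ²(ℤ)` corresponds to a unique such `f`). -/
theorem flat_band_basis (N : ℕ) (hN : 1 ≤ N) :
    (∀ f : ℤ → ℕ → ℝ, InKerDelta N f →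
      ∀ (n : ℤ) (k : ℕ), f n k = ∑' m : ℤ, f m 1 * psiFun N m n k) ∧
    (∀ h : ℤ → ℝ, Summable (fun n => (h n)^2) →
      ∃! f : ℤ → ℕ → ℝ, InKerDelta N f ∧ ∀ m : ℤ, f m 1 = h m) := by
  constructor
  · exact fun f hf n k => kerDelta_expand N f hf n k
  · intro h hsum
    set fd : ℤ → ℕ → ℝ := fun n k =>
      if k % 2 = 1 ∧ k ≤ 2*N+1 then negIS^[k/2] h n else 0 with hfd
    have hrow : ∀ k : ℕ, Summable fun n : ℤ => (fd n k)^2 := by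
      intro k
      by_cases hc : k % 2 = 1 ∧ k ≤ 2*N+1
      · simp only [hfd, if_pos hc]; exact summable_sq_negIS_iter _ hsum
      · simp only [hfd, if_neg hc]; simpa using summable_zero
    have hker : InKerDelta N fd := by
      refine ⟨?_, ?_, ?_, ?_⟩
      · intro n k hk
        exact if_neg (by omega)
      · have hG : Summable fun y : ℕ × ℤ => (fd y.2 y.1)^2 := by
          rw [summable_prod_of_nonneg (fun y => sq_nonneg _)]
          refine ⟨fun k => hrow k, ?_⟩
          apply summable_of_ne_finset_zero (s := Finset.range (2*N+2))
          intro k hk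
          have hk' : 2*N+1 < k := by simp only [Finset.mem_range, not_lt] at hk; omega
          have hz : ∀ n : ℤ, fd n k = 0 := fun n => if_neg (by omega)
          simp [hz]
        have h2 := hG.comp_injective (Equiv.prodComm ℤ ℕ).injective
        simpa [Function.comp_def] using h2
      · intro n k hk
        have e1 : fd n (2*k) = 0 := if_neg (by omega)
        have e2 : fd (n-1) (2*k+2) = 0 := if_neg (by omega)
        have e3 : fd n (2*k+2) = 0 := if_neg (by omega)
        rw [e1, e2, e3]; ring
      · intro n k hk1 hkN
        obtain ⟨j, rfl⟩ : ∃ j, k = j + 1 := ⟨k-1, by omega⟩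
        have c1 : (2*(j+1)-1) % 2 = 1 ∧ 2*(j+1)-1 ≤ 2*N+1 := by omega
        have c2 : (2*(j+1)+1) % 2 = 1 ∧ 2*(j+1)+1 ≤ 2*N+1 := by omega
        have e1 : (2*(j+1)-1)/2 = j := by omega
        have e2 : (2*(j+1)+1)/2 = j+1 := by omega
        simp only [hfd, if_pos c1, if_pos c2, e1, e2]
        rw [Function.iterate_succ_apply']
        simp only [negIS]
        ring
    have hfirst : ∀ m : ℤ, fd m 1 = h m := by
      intro m
      have c : 1 % 2 = 1 ∧ 1 ≤ 2*N+1 := by omega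
      simp only [hfd, if_pos c]
      norm_num
    refine ⟨fd, ⟨hker, hfirst⟩, ?_⟩
    rintro f' ⟨hf', hf1'⟩
    have hfun1 : (fun m => f' m 1) = h := funext hf1'
    funext n k
    by_cases hc : k % 2 = 1 ∧ k ≤ 2*N+1
    · obtain ⟨j, rfl⟩ : ∃ j, k = 2*j+1 := ⟨k/2, by omega⟩
      have hjN : j ≤ N := by omega
      rw [kerDelta_odd N f' hf' j hjN n, hfun1]
      simp only [hfd, if_pos hc]
      rw [show (2*j+1)/2 = j from by omega]
    · have hz : f' n k = 0 := by
        by_cases hk2 : k % 2 = 1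
        · exact hf'.1 n k (Or.inr (by omega))
        · have : k = 2*(k/2) := by omega
          rw [this]; exact kerDelta_even N f' hf' _ n
      rw [hz]
      exact (if_neg hc).symm
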